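/- One has (g − 1)·(∑_{i=1}^ℓ r_i² + ∑_{1 ≤ k < i ≤ ℓ} r_i r_k) − g ≤ (r² − r)(g − 1). (This is the dimension count showing that the space of strictly semistable vector bundles with graduation type (r₁, …, r_ℓ) has dimension at most (r² − r)(g − 1): the space of graduations contributes ℓ − g + ∑ r_i²(g − 1) and the extension data contribute at most −ℓ + (g − 1) ∑_{k < i} r_i r_k, and the total is maximized at ℓ = 2, {r₁, r₂} = {1, r − 1}.) -/

import Mathlib

/-- Let `g ≥ 3` and `r ≥ 2`, with `r ≥ 3` if `g = 3`.  Let `ℓ ≥ 2` and let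
`r₁, …, r_ℓ` be positive integers with `∑ rᵢ = r`.  Then
`(g - 1)·(∑ rᵢ² + ∑_{k<i} rᵢ rₖ) - g ≤ (r² - r)(g - 1)`.
(Dimension count showing that the space of strictly semistable bundles with graduation
type `(r₁, …, r_ℓ)` has dimension at most `(r² - r)(g - 1)`.) -/
theorem strictly_semistable_dimension_bound (g r : ℤ)
    (hg : 3 ≤ g) (hr : 2 ≤ r) (h3 : g = 3 → 3 ≤ r)
    (l : ℕ) (hl : 2 ≤ l)
    (rk : Fin l → ℤ) (hpos : ∀ i, 1 ≤ rk i) (hsum : ∑ i, rk i = r) :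
    (g - 1) * ((∑ i, (rk i) ^ 2) + ∑ i, ∑ k ∈ Finset.Iio i, rk i * rk k) - g ≤
      (r ^ 2 - r) * (g - 1) := by
  set S : ℤ := ∑ i, (rk i) ^ 2 with hS
  set T : ℤ := ∑ i, ∑ k ∈ Finset.Iio i, rk i * rk k with hT
  -- indices 0 and 1
  set z0 : Fin l := ⟨0, by omega⟩ with hz0
  set o1 : Fin l := ⟨1, by omega⟩ with ho1
  -- identity : S + 2T = r^2
  have hswap : T = ∑ i, ∑ j ∈ Finset.Ioi i, rk j * rk i := by
    rw [hT]
    exact Finset.sum_comm' (s := Finset.univ) (t := fun i => Finset.Iio i)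
      (t' := Finset.univ) (s' := fun j => Finset.Ioi j) (f := fun i j => rk i * rk j)
      (fun x y => by simp [Finset.mem_Iio, Finset.mem_Ioi])
  have hswap2 : T = ∑ i, ∑ j ∈ Finset.Ioi i, rk i * rk j := by
    rw [hswap]
    exact Finset.sum_congr rfl fun i _ => Finset.sum_congr rfl fun j _ => mul_comm _ _
  have hoff := Finset.sum_sum_Ioi_add_eq_sum_sum_off_diag (fun i j : Fin l => rk i * rk j)
  simp only [Finset.sum_add_distrib] at hoff
  rw [← hswap, ← hswap2] at hoff
  simp only [Finset.compl_singleton, ← Finset.sum_mul] at hoff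
  have hoff2 : T + T = ∑ x, (r - rk x) * rk x := by
    rw [hoff]
    refine Finset.sum_congr rfl fun x _ => ?_
    have h := Finset.sum_erase_eq_sub (s := Finset.univ) (f := rk) (Finset.mem_univ x)
    rw [hsum] at h
    have h2 := congrArg (· * rk x) h
    convert h2 using 2
  have hx : ∑ i, (r - rk i) * rk i = r * r - S := by
    calc ∑ i, (r - rk i) * rk i = ∑ i, (r * rk i - rk i ^ 2) :=
          Finset.sum_congr rfl fun i _ => by ring
      _ = r * (∑ i, rk i) - S := by rw [Finset.sum_sub_distrib, Finset.mul_sum, hS]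
      _ = r * r - S := by rw [hsum]
  have hid : S + 2 * T = r ^ 2 := by linear_combination hoff2 + hx
  -- lower bound : r - 1 ≤ T
  have hzo : z0 ≠ o1 := by simp [hz0, ho1, Fin.ext_iff]
  have hTlb : r - 1 ≤ T := by
    have key : ∀ i : Fin l,
        rk i + (if i = o1 then rk z0 - 1 else 0) + (if i = z0 then -rk z0 else 0)
          ≤ ∑ k ∈ Finset.Iio i, rk i * rk k := by
      intro i
      by_cases hiz : i = z0
      · subst hiz
        rw [if_neg hzo, if_pos rfl]
        have : (0 : ℤ) ≤ ∑ k ∈ Finset.Iio z0, rk z0 * rk k :=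
          Finset.sum_nonneg fun k _ => mul_nonneg (by linarith [hpos z0]) (by linarith [hpos k])
        linarith
      · have hz_mem : z0 ∈ Finset.Iio i := by
          simp only [Finset.mem_Iio]
          have : i.val ≠ 0 := fun h => hiz (Fin.ext (by simp [hz0, h]))
          exact Fin.lt_def.mpr (by simp [hz0]; omega)
        have hsingle : rk i * rk z0 ≤ ∑ k ∈ Finset.Iio i, rk i * rk k :=
          Finset.single_le_sum (f := fun k => rk i * rk k)
            (fun k _ => mul_nonneg (by linarith [hpos i]) (by linarith [hpos k])) hz_mem
        rw [if_neg hiz]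
        by_cases hio : i = o1
        · rw [if_pos hio]
          nlinarith [hpos i, hpos z0]
        · rw [if_neg hio]
          nlinarith [hpos i, hpos z0]
    have hsumb := Finset.sum_le_sum (s := Finset.univ) (fun i _ => key i)
    rw [Finset.sum_add_distrib, Finset.sum_add_distrib, hsum,
      Finset.sum_ite_eq' Finset.univ o1 (fun _ => rk z0 - 1),
      Finset.sum_ite_eq' Finset.univ z0 (fun _ => -rk z0)] at hsumb
    simp only [Finset.mem_univ, if_pos] at hsumb
    rw [hT]
    linarith
  -- conclude
  nlinarith [mul_nonneg (by linarith : (0:ℤ) ≤ g - 1) (by linarith : (0:ℤ) ≤ T - (r - 1)), hid]
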